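/- Let k, r, n, m be positive integers with k ≤ n ≤ m and n > (k−1)·r. Then there exists a family F of n-element subsets of Fin m with |F| ≥ binom(m,k) / binom(n,k)² that is r-cover-free: for all pairwise distinct f₀, f₁, …, f_r ∈ F, the set f₀ is not contained in f₁ ∪ … ∪ f_r. -/

import Mathlib

open Finset

/-- Counting supersets: the number of `n`-sets containing a fixed `k`-set `S`
is at most `(m-k).choose (n-k)`. -/
lemma aux_supersets_card {m k n : ℕ} (S : Finset (Fin m)) (hS : S.card = k) :
    ((univ : Finset (Finset (Fin m))).filter
      (fun A => A.card = n ∧ S ⊆ A)).card ≤ (m - k).choose (n - k) := by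
  classical
  have hinj : Set.InjOn (fun A : Finset (Fin m) => A \ S)
      ((univ : Finset (Finset (Fin m))).filter (fun A => A.card = n ∧ S ⊆ A)) := by
    intro A hA B hB hAB
    simp only [coe_filter, Set.mem_setOf_eq, mem_univ, true_and] at hA hB
    have : A \ S ∪ S = B \ S ∪ S := by rw [show A \ S = B \ S from hAB]
    rwa [sdiff_union_of_subset hA.2, sdiff_union_of_subset hB.2] at this
  have hmaps : ∀ A ∈ (univ : Finset (Finset (Fin m))).filter (fun A => A.card = n ∧ S ⊆ A),
      A \ S ∈ (univ \ S).powersetCard (n - k) := by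
    intro A hA
    simp only [mem_filter, mem_univ, true_and] at hA
    rw [mem_powersetCard]
    refine ⟨fun x hx => mem_sdiff.2 ⟨mem_univ _, (mem_sdiff.1 hx).2⟩, ?_⟩
    rw [card_sdiff_of_subset hA.2, hA.1, hS]
  calc ((univ : Finset (Finset (Fin m))).filter (fun A => A.card = n ∧ S ⊆ A)).card
      ≤ ((univ \ S).powersetCard (n - k)).card :=
        card_le_card_of_injOn _ hmaps hinj
    _ = (m - k).choose (n - k) := by
        rw [card_powersetCard, card_sdiff_of_subset (subset_univ S), card_univ, Fintype.card_fin, hS]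

theorem stmt_15 (k r n m : ℕ) (hk : 0 < k) (hr : 0 < r) (hkn : k ≤ n) (hnm : n ≤ m)
    (hcov : (k - 1) * r < n) :
    ∃ F : Finset (Finset (Fin m)),
      (∀ f ∈ F, f.card = n) ∧
      ((Nat.choose m k : ℝ) / (Nat.choose n k : ℝ) ^ 2 ≤ (F.card : ℝ)) ∧
      (∀ f₀ ∈ F, ∀ g : Fin r → Finset (Fin m),
        (∀ i, g i ∈ F) → (∀ i, g i ≠ f₀) → (∀ i j, i ≠ j → g i ≠ g j) →
        ¬ f₀ ⊆ Finset.univ.biUnion g) := by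
  classical
  -- P F : all members are n-sets with pairwise intersections of size < k
  set P : Finset (Finset (Fin m)) → Prop := fun F =>
    (∀ f ∈ F, f.card = n) ∧ ∀ f ∈ F, ∀ g ∈ F, f ≠ g → (f ∩ g).card ≤ k - 1 with hP
  have hPdec : DecidablePred P := fun _ => by rw [hP]; infer_instance
  have hne : ((univ : Finset (Finset (Finset (Fin m)))).filter P).Nonempty := by
    refine ⟨∅, ?_⟩
    simp [hP]
  obtain ⟨F, hFmem, hFmax⟩ := Finset.exists_max_image _ Finset.card hne
  rw [mem_filter, hP] at hFmem
  obtain ⟨-, hcard, hpair⟩ := hFmem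
  -- maximality: every n-set meets some member of F in ≥ k elements
  have hmax : ∀ A : Finset (Fin m), A.card = n → ∃ f ∈ F, k ≤ (A ∩ f).card := by
    intro A hA
    by_cases hAF : A ∈ F
    · exact ⟨A, hAF, by rw [inter_self, hA]; exact hkn⟩
    by_contra hcon
    push_neg at hcon
    have hins : P (insert A F) := by
      constructor
      · intro f hf
        rcases mem_insert.1 hf with rfl | hf
        · exact hA
        · exact hcard f hf
      · intro f hf g hg hfg
        have key : ∀ h ∈ F, (A ∩ h).card ≤ k - 1 := fun h hh => by
          have := hcon h hh; omega
        rcases mem_insert.1 hf with rfl | hf'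
        · rcases mem_insert.1 hg with rfl | hg'
          · exact absurd rfl hfg
          · exact key g hg'
        · rcases mem_insert.1 hg with rfl | hg'
          · rw [inter_comm]; exact key f hf'
          · exact hpair f hf' g hg' hfg
    have := hFmax (insert A F) (mem_filter.2 ⟨mem_univ _, hins⟩)
    rw [card_insert_of_notMem hAF] at this
    omega
  refine ⟨F, hcard, ?_, ?_⟩
  · -- cardinality bound
    -- every n-set lies in some "blocked" set
    have hcover : ((univ : Finset (Finset (Fin m))).filter (fun A => A.card = n)) ⊆
        F.biUnion (fun f => (f.powersetCard k).biUnion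
          (fun S => (univ : Finset (Finset (Fin m))).filter (fun A => A.card = n ∧ S ⊆ A))) := by
      intro A hA
      rw [mem_filter] at hA
      obtain ⟨f, hf, hkf⟩ := hmax A hA.2
      obtain ⟨S, hSsub, hScard⟩ := Finset.exists_subset_card_eq hkf
      rw [mem_biUnion]
      refine ⟨f, hf, ?_⟩
      rw [mem_biUnion]
      refine ⟨S, mem_powersetCard.2 ⟨hSsub.trans inter_subset_right, hScard⟩, ?_⟩
      exact mem_filter.2 ⟨mem_univ _, hA.2, hSsub.trans inter_subset_left⟩
    have hcount : m.choose n ≤ F.card * (n.choose k * (m - k).choose (n - k)) := by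
      have h1 : ((univ : Finset (Finset (Fin m))).filter (fun A => A.card = n)).card
          = m.choose n := by
        have : (univ : Finset (Finset (Fin m))).filter (fun A => A.card = n)
            = (univ : Finset (Fin m)).powersetCard n := by
          ext A; simp [mem_powersetCard]
        rw [this, card_powersetCard, card_univ, Fintype.card_fin]
      calc m.choose n = _ := h1.symm
        _ ≤ (F.biUnion (fun f => (f.powersetCard k).biUnion
              (fun S => (univ : Finset (Finset (Fin m))).filter
                (fun A => A.card = n ∧ S ⊆ A)))).card := card_le_card hcover
        _ ≤ ∑ f ∈ F, ((f.powersetCard k).biUnion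
              (fun S => (univ : Finset (Finset (Fin m))).filter
                (fun A => A.card = n ∧ S ⊆ A))).card := card_biUnion_le
        _ ≤ ∑ _f ∈ F, (n.choose k * (m - k).choose (n - k)) := by
            refine Finset.sum_le_sum fun f hf => ?_
            calc ((f.powersetCard k).biUnion _).card
                ≤ ∑ S ∈ f.powersetCard k,
                  ((univ : Finset (Finset (Fin m))).filter
                    (fun A => A.card = n ∧ S ⊆ A)).card := card_biUnion_le
              _ ≤ ∑ _S ∈ f.powersetCard k, (m - k).choose (n - k) := by
                  refine Finset.sum_le_sum fun S hS => ?_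
                  exact aux_supersets_card S (mem_powersetCard.1 hS).2
              _ = n.choose k * (m - k).choose (n - k) := by
                  rw [Finset.sum_const, card_powersetCard, hcard f hf, smul_eq_mul]
        _ = F.card * (n.choose k * (m - k).choose (n - k)) := by
            rw [Finset.sum_const, smul_eq_mul]
    -- turn into the real-number bound
    have hid : m.choose n * n.choose k = m.choose k * (m - k).choose (n - k) :=
      Nat.choose_mul hkn
    have hmk : 0 < (m - k).choose (n - k) :=
      Nat.choose_pos (Nat.sub_le_sub_right hnm k)
    have hnk : 0 < n.choose k := Nat.choose_pos hkn
    have hnat : m.choose k ≤ F.card * (n.choose k) ^ 2 := by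
      have h2 : m.choose k * (m - k).choose (n - k)
          ≤ F.card * (n.choose k) ^ 2 * (m - k).choose (n - k) := by
        calc m.choose k * (m - k).choose (n - k) = m.choose n * n.choose k := hid.symm
          _ ≤ (F.card * (n.choose k * (m - k).choose (n - k))) * n.choose k :=
              Nat.mul_le_mul_right _ hcount
          _ = F.card * (n.choose k) ^ 2 * (m - k).choose (n - k) := by ring
      exact Nat.le_of_mul_le_mul_right h2 hmk
    rw [div_le_iff₀ (by positivity)]
    calc (m.choose k : ℝ) ≤ (F.card * (n.choose k) ^ 2 : ℕ) := by exact_mod_cast hnat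
      _ = (F.card : ℝ) * (n.choose k : ℝ) ^ 2 := by push_cast; ring
  · -- cover-free
    intro f₀ hf₀ g hg hgne hginj hsub
    have hcard₀ : f₀.card = n := hcard f₀ hf₀
    have : f₀ = (univ : Finset (Fin r)).biUnion (fun i => f₀ ∩ g i) := by
      ext x
      simp only [mem_biUnion, mem_univ, true_and, mem_inter]
      constructor
      · intro hx
        have := hsub hx
        rw [mem_biUnion] at this
        obtain ⟨i, -, hi⟩ := this
        exact ⟨i, hx, hi⟩
      · rintro ⟨i, hx, -⟩; exact hx
    have hle : f₀.card ≤ (k - 1) * r := by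
      calc f₀.card = ((univ : Finset (Fin r)).biUnion (fun i => f₀ ∩ g i)).card := by
            rw [← this]
        _ ≤ ∑ i : Fin r, (f₀ ∩ g i).card := card_biUnion_le
        _ ≤ ∑ _i : Fin r, (k - 1) := by
            refine Finset.sum_le_sum fun i _ => ?_
            exact hpair f₀ hf₀ (g i) (hg i) (Ne.symm (hgne i))
        _ = (k - 1) * r := by simp [mul_comm]
    rw [hcard₀] at hle
    omega
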